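/- Let G be a finite simple graph of order at least two, with minimum degree at least one, having a unique minimum dominating set (i.e., there is exactly one dominating set of G of cardinality γ(G)). Then G is a DD2-graph; moreover, there exists a DD2-pair (D, D2) of G with |D| = γ(G). -/

import Mathlib

open Finset

variable {V : Type*} [Fintype V] [DecidableEq V]

/-- `D` is a dominating set of `G`: every vertex outside `D` has a neighbour in `D`. -/
def IsDomSet (G : SimpleGraph V) (D : Finset V) : Prop :=
  ∀ v ∉ D, ∃ u ∈ D, G.Adj u v

/-- `D` is a certified dominating set of `G`: it is dominating and every vertex of `D`
has either zero or at least two neighbours outside `D`. -/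
def IsCertDomSet (G : SimpleGraph V) [DecidableRel G.Adj] (D : Finset V) : Prop :=
  IsDomSet G D ∧ ∀ v ∈ D, (G.neighborFinset v \ D).card = 0 ∨ 2 ≤ (G.neighborFinset v \ D).card

/-- The domination number: minimum cardinality of a dominating set. -/
noncomputable def gamma (G : SimpleGraph V) : ℕ :=
  sInf {n | ∃ D : Finset V, IsDomSet G D ∧ D.card = n}

/-- The certified domination number: minimum cardinality of a certified dominating set. -/
noncomputable def gammaCer (G : SimpleGraph V) [DecidableRel G.Adj] : ℕ :=
  sInf {n | ∃ D : Finset V, IsCertDomSet G D ∧ D.card = n}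

/-- A leaf is a vertex of degree one. -/
abbrev IsLeaf (G : SimpleGraph V) [DecidableRel G.Adj] (v : V) : Prop := G.degree v = 1

/-- The set of leaf-neighbours of a vertex. -/
abbrev leafNbrs (G : SimpleGraph V) [DecidableRel G.Adj] (v : V) : Finset V :=
  (G.neighborFinset v).filter (fun l => G.degree l = 1)

/-- A weak support is a vertex adjacent to exactly one leaf. -/
abbrev IsWeakSupport (G : SimpleGraph V) [DecidableRel G.Adj] (v : V) : Prop :=
  (leafNbrs G v).card = 1

/-- A strong support is a vertex adjacent to at least two leaves. -/
abbrev IsStrongSupport (G : SimpleGraph V) [DecidableRel G.Adj] (v : V) : Prop :=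
  2 ≤ (leafNbrs G v).card

/-- `X` is a 2-dominating set of `G`: every vertex outside `X` has at least two
neighbours in `X`. -/
def IsTwoDomSet (G : SimpleGraph V) [DecidableRel G.Adj] (X : Finset V) : Prop :=
  ∀ v ∉ X, 2 ≤ (G.neighborFinset v ∩ X).card

/-- `(D, D₂)` is a `DD₂`-pair of `G`. -/
def IsDD2Pair (G : SimpleGraph V) [DecidableRel G.Adj] (D D2 : Finset V) : Prop :=
  Disjoint D D2 ∧ IsDomSet G D ∧ IsTwoDomSet G D2

theorem dd2_of_unique_min_domSet (G : SimpleGraph V) [DecidableRel G.Adj]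
    (hcard : 2 ≤ Fintype.card V)
    (hdeg : ∀ v : V, 1 ≤ G.degree v)
    (huniq : ∃! D : Finset V, IsDomSet G D ∧ D.card = gamma G) :
    (∃ D D2 : Finset V, IsDD2Pair G D D2) ∧
      ∃ D D2 : Finset V, IsDD2Pair G D D2 ∧ D.card = gamma G := by
  obtain ⟨D, ⟨hDdom, hDcard⟩, huni⟩ := huniq
  have hmin : ∀ D' : Finset V, IsDomSet G D' → gamma G ≤ D'.card := by
    intro D' hD'
    exact Nat.sInf_le ⟨D', hD', rfl⟩
  -- key claim: every vertex of D has at least two neighbours outside D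
  have key : ∀ v ∈ D, 2 ≤ (G.neighborFinset v \ D).card := by
    intro v hv
    by_contra hlt
    push_neg at hlt
    interval_cases h : (G.neighborFinset v \ D).card
    · -- no neighbours outside D : erase v
      have hsub : G.neighborFinset v ⊆ D := by
        intro u hu
        by_contra hu'
        exact absurd (Finset.card_eq_zero.mp h ▸ Finset.mem_sdiff.mpr ⟨hu, hu'⟩)
          (Finset.notMem_empty u)
      have hdom' : IsDomSet G (D.erase v) := by
        intro w hw
        by_cases hwv : w = v
        · subst hwv
          have : 0 < (G.neighborFinset w).card := lt_of_lt_of_le Nat.zero_lt_one (hdeg w)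
          obtain ⟨u, hu⟩ := Finset.card_pos.mp this
          have hadj : G.Adj w u := (SimpleGraph.mem_neighborFinset _ _ _).mp hu
          exact ⟨u, Finset.mem_erase.mpr ⟨fun h' => G.loopless.irrefl w (h' ▸ hadj), hsub hu⟩,
            hadj.symm⟩
        · have hwD : w ∉ D := fun hwD => hw (Finset.mem_erase.mpr ⟨hwv, hwD⟩)
          obtain ⟨x, hxD, hxw⟩ := hDdom w hwD
          refine ⟨x, Finset.mem_erase.mpr ⟨?_, hxD⟩, hxw⟩
          rintro rfl
          exact hwD (hsub ((SimpleGraph.mem_neighborFinset _ _ _).mpr hxw))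
      have h1 := hmin _ hdom'
      have h2 : (D.erase v).card = D.card - 1 := Finset.card_erase_of_mem hv
      have h3 : 1 ≤ D.card := Finset.card_pos.mpr ⟨v, hv⟩
      omega
    · -- exactly one neighbour u outside D : swap
      obtain ⟨u, hu⟩ := Finset.card_eq_one.mp h
      have huS : u ∈ G.neighborFinset v \ D := hu ▸ Finset.mem_singleton_self u
      obtain ⟨huN, huD⟩ := Finset.mem_sdiff.mp huS
      have hadj : G.Adj v u := (SimpleGraph.mem_neighborFinset _ _ _).mp huN
      set D' := insert u (D.erase v) with hD'def
      have hdom' : IsDomSet G D' := by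
        intro w hw
        by_cases hwv : w = v
        · subst hwv
          exact ⟨u, Finset.mem_insert_self _ _, hadj.symm⟩
        · have hwD : w ∉ D := by
            intro hwD
            exact hw (Finset.mem_insert_of_mem (Finset.mem_erase.mpr ⟨hwv, hwD⟩))
          obtain ⟨x, hxD, hxw⟩ := hDdom w hwD
          by_cases hxv : x = v
          · rw [hxv] at hxw
            have : w ∈ G.neighborFinset v \ D :=
              Finset.mem_sdiff.mpr ⟨(SimpleGraph.mem_neighborFinset _ _ _).mpr hxw, hwD⟩
            rw [hu, Finset.mem_singleton] at this
            exact absurd (this ▸ Finset.mem_insert_self u (D.erase v)) hw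
          · exact ⟨x, Finset.mem_insert_of_mem (Finset.mem_erase.mpr ⟨hxv, hxD⟩), hxw⟩
      have hcard' : D'.card = gamma G := by
        have huE : u ∉ D.erase v := fun h' => huD (Finset.mem_of_mem_erase h')
        have h1 : D'.card = (D.erase v).card + 1 := Finset.card_insert_of_notMem huE
        have h2 : (D.erase v).card = D.card - 1 := Finset.card_erase_of_mem hv
        have h3 : 1 ≤ D.card := Finset.card_pos.mpr ⟨v, hv⟩
        omega
      have : D' = D := huni D' ⟨hdom', hcard'⟩
      have hvD' : v ∈ D' := this ▸ hv
      rcases Finset.mem_insert.mp hvD' with h' | h'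
      · exact huD (h' ▸ hv)
      · exact (Finset.mem_erase.mp h').1 rfl
  have htwo : IsTwoDomSet G Dᶜ := by
    intro v hv
    have hvD : v ∈ D := by simpa using hv
    have : G.neighborFinset v ∩ Dᶜ = G.neighborFinset v \ D := by
      ext x; simp
    rw [this]
    exact key v hvD
  have hpair : IsDD2Pair G D Dᶜ := ⟨disjoint_compl_right, hDdom, htwo⟩
  exact ⟨⟨D, Dᶜ, hpair⟩, ⟨D, Dᶜ, hpair, hDcard⟩⟩
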